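/- Schweikart's constant bound: there exists a universal constant τ = log(1 + √2) such that for every hyperbolic geodesic A in the hyperbolic plane not passing through the origin, with summit ẑ_A the point of A closest to the origin, and for each endpoint η ∈ ∂ℍ² of A, the geodesic ray s_η from the origin to η satisfies min{ d(w, ẑ_A) : w ∈ s_η } < τ. -/

import Mathlib

open Real
open scoped RealInnerProductSpace

/-- Inverse hyperbolic cosine. -/
noncomputable def arcosh (x : ℝ) : ℝ := Real.log (x + Real.sqrt (x ^ 2 - 1))

/-- The hyperbolic distance in the Poincaré ball model (on the open unit ball). -/
noncomputable def hDist {n : ℕ} (x y : EuclideanSpace ℝ (Fin n)) : ℝ :=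
  _root_.arcosh (1 + 2 * ‖x - y‖ ^ 2 / ((1 - ‖x‖ ^ 2) * (1 - ‖y‖ ^ 2)))

lemma cosh_arcosh {x : ℝ} (hx : 1 ≤ x) : Real.cosh (_root_.arcosh x) = x := by
  have h1 : (0:ℝ) ≤ x ^ 2 - 1 := by nlinarith
  have hs : Real.sqrt (x ^ 2 - 1) ^ 2 = x ^ 2 - 1 := Real.sq_sqrt h1
  have hz : 0 < x + Real.sqrt (x ^ 2 - 1) := by positivity
  rw [_root_.arcosh, Real.cosh_eq, Real.exp_log hz, Real.exp_neg, Real.exp_log hz]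
  field_simp
  nlinarith [Real.sqrt_nonneg (x^2-1)]

lemma arcosh_nonneg {x : ℝ} (hx : 1 ≤ x) : 0 ≤ _root_.arcosh x := by
  have h1 : (0:ℝ) ≤ x ^ 2 - 1 := by nlinarith
  have : (1:ℝ) ≤ x + Real.sqrt (x ^ 2 - 1) := by nlinarith [Real.sqrt_nonneg (x^2-1)]
  exact Real.log_nonneg this

lemma arcosh_lt {x : ℝ} (hx : 1 ≤ x) (hx2 : x < Real.sqrt 2) :
    _root_.arcosh x < Real.log (1 + Real.sqrt 2) := by
  have h1 : (0:ℝ) ≤ x ^ 2 - 1 := by nlinarith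
  have hz : 0 < x + Real.sqrt (x ^ 2 - 1) := by positivity
  apply Real.log_lt_log hz
  have hxx : x ^ 2 < 2 := by
    have := Real.sq_sqrt (by norm_num : (2:ℝ) ≥ 0)
    nlinarith [Real.sqrt_nonneg (2:ℝ)]
  have : Real.sqrt (x ^ 2 - 1) < 1 := by
    have := Real.sqrt_lt_sqrt h1 (show x ^ 2 - 1 < 1 by linarith)
    simpa using this
  linarith

lemma le_of_arcosh_le {a b : ℝ} (ha : 1 ≤ a) (hb : 1 ≤ b) (h : _root_.arcosh a ≤ _root_.arcosh b) : a ≤ b := by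
  have h1 : Real.cosh (_root_.arcosh a) ≤ Real.cosh (_root_.arcosh b) := by
    rw [Real.cosh_le_cosh, abs_of_nonneg (_root_.arcosh_nonneg ha), abs_of_nonneg (_root_.arcosh_nonneg hb)]
    exact h
  rwa [_root_.cosh_arcosh ha, _root_.cosh_arcosh hb] at h1

lemma cosh_le_exp_abs (v : ℝ) : Real.cosh v ≤ Real.exp |v| := by
  rw [Real.cosh_eq]
  have h1 : Real.exp v ≤ Real.exp |v| := Real.exp_le_exp.mpr (le_abs_self v)
  have h2 : Real.exp (-v) ≤ Real.exp |v| := Real.exp_le_exp.mpr (neg_le_abs v)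
  linarith

lemma sinh_le_mul_exp {v : ℝ} (hv : 0 ≤ v) : Real.sinh v ≤ v * Real.exp v := by
  rw [Real.sinh_eq]
  have h1 : 1 - 2*v ≤ Real.exp (-(2*v)) := by
    have := Real.add_one_le_exp (-(2*v)); linarith
  have h2 : Real.exp (-v) = Real.exp v * Real.exp (-(2*v)) := by
    rw [← Real.exp_add]; ring_nf
  have h3 : 0 < Real.exp v := Real.exp_pos v
  rw [h2]
  nlinarith [Real.exp_pos v]

lemma cosh_sub_one_le (u : ℝ) : Real.cosh u - 1 ≤ u^2 / 2 * Real.exp |u| := by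
  have hid : Real.cosh u = 2 * Real.sinh (u/2)^2 + 1 := by
    rw [show u = 2*(u/2) by ring, Real.cosh_two_mul, Real.cosh_sq]
    ring_nf
  have hs : Real.sinh (u/2)^2 ≤ (u/2)^2 * Real.exp |u| := by
    have habs : |Real.sinh (u/2)| = Real.sinh |u/2| := Real.abs_sinh (u/2)
    have h1 : Real.sinh |u/2| ≤ |u/2| * Real.exp |u/2| := sinh_le_mul_exp (abs_nonneg _)
    have h2 : Real.sinh (u/2)^2 = Real.sinh |u/2|^2 := by
      rw [← habs, sq_abs]
    have h3 : Real.sinh |u/2| ^2 ≤ (|u/2| * Real.exp |u/2|)^2 := by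
      have hnn : 0 ≤ Real.sinh |u/2| := by
        rw [← Real.sinh_zero]
        exact Real.sinh_le_sinh.mpr (abs_nonneg _)
      nlinarith
    have h4 : (|u/2| * Real.exp |u/2|)^2 = (u/2)^2 * (Real.exp |u/2|)^2 := by
      rw [mul_pow, sq_abs]
    have h5 : (Real.exp |u/2|)^2 = Real.exp (2*|u/2|) := by
      rw [sq, ← Real.exp_add]; ring_nf
    have h6 : 2 * |u/2| = |u| := by
      rw [abs_div]; simp [abs_two]; ring
    rw [h4, h5, h6] at h3
    linarith [h2.le.trans h3]
  nlinarith [hs]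


lemma cs_aux (I B W0 : ℝ) (h1 : I * I ≤ B * W0 ^ 2) (h2 : 4 * (I * I) = ((1 + B) * W0) ^ 2)
    (h3 : B < 1) : W0 = 0 := by
  have e5 : ((1 - B) * W0) ^ 2 ≤ 0 := by nlinarith
  have e6 : (1 - B) * W0 = 0 := by
    have := sq_nonneg ((1 - B) * W0)
    exact pow_eq_zero_iff (two_ne_zero) |>.mp (le_antisymm e5 this)
  rcases mul_eq_zero.mp e6 with h | h
  · exfalso; linarith
  · exact h

set_option maxHeartbeats 2000000 in
lemma midpoint_identity {E : Type*} [NormedAddCommGroup E] [InnerProductSpace ℝ E]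
    (x m z : E) (k : ℝ)
    (hx : ‖x‖ < 1) (hm : ‖m‖ < 1) (hz : ‖z‖ < 1)
    (h1 : (k - 1) * ((1 - ‖x‖^2) * (1 - ‖m‖^2)) = 2 * ‖x - m‖^2)
    (h2 : (k - 1) * ((1 - ‖m‖^2) * (1 - ‖z‖^2)) = 2 * ‖m - z‖^2)
    (h3 : (k^2 - 1) * ((1 - ‖x‖^2) * (1 - ‖z‖^2)) = ‖x - z‖^2) :
    (1 + ‖x‖^2) * ((1 - ‖m‖^2) * (1 - ‖z‖^2)) + (1 + ‖z‖^2) * ((1 - ‖x‖^2) * (1 - ‖m‖^2))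
      = 2 * k * ((1 + ‖m‖^2) * ((1 - ‖x‖^2) * (1 - ‖z‖^2))) := by
  set a : ℝ := ‖x‖^2 with ha
  set b : ℝ := ‖m‖^2 with hb
  set cc : ℝ := ‖z‖^2 with hc
  have ha1 : a < 1 := by rw [ha]; nlinarith [norm_nonneg x]
  have hb1 : b < 1 := by rw [hb]; nlinarith [norm_nonneg m]
  have hc1 : cc < 1 := by rw [hc]; nlinarith [norm_nonneg z]
  have hb0 : (0:ℝ) ≤ b := by positivity
  set p : ℝ := ⟪x, m⟫ with hpd
  set q : ℝ := ⟪m, z⟫ with hqd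
  set w : ℝ := ⟪x, z⟫ with hwd
  have exm : ‖x - m‖^2 = a - 2*p + b := by rw [ha, hb, hpd]; exact norm_sub_sq_real x m
  have emz : ‖m - z‖^2 = b - 2*q + cc := by rw [hb, hc, hqd]; exact norm_sub_sq_real m z
  have exz : ‖x - z‖^2 = a - 2*w + cc := by rw [ha, hc, hwd]; exact norm_sub_sq_real x z
  rw [exm] at h1; rw [emz] at h2; rw [exz] at h3
  have hp : p = (a+b)/2 - (k-1)*(1-a)*(1-b)/4 := by linarith [h1]
  have hq : q = (b+cc)/2 - (k-1)*(1-b)*(1-cc)/4 := by linarith [h2]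
  have hw : w = (a+cc)/2 - (k^2-1)*(1-a)*(1-cc)/2 := by linarith [h3]
  clear_value a b cc p q w
  set w0 : ℝ := (1+a)*((1-b)*(1-cc)) + (1+cc)*((1-a)*(1-b)) - 2*k*((1+b)*((1-a)*(1-cc)))
    with hw0
  set W : E := (2*(1-b)*(1-cc)) • x + (2*(1-a)*(1-b)) • z - (4*k*(1-a)*(1-cc)) • m with hW
  clear_value w0
  have nW : ‖W‖^2 = (2*(1-b)*(1-cc))^2*a + (2*(1-a)*(1-b))^2*cc + (4*k*(1-a)*(1-cc))^2*b
      + 2*(2*(1-b)*(1-cc))*(2*(1-a)*(1-b))*w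
      - 2*(2*(1-b)*(1-cc))*(4*k*(1-a)*(1-cc))*p
      - 2*(2*(1-a)*(1-b))*(4*k*(1-a)*(1-cc))*q := by
    rw [← real_inner_self_eq_norm_sq, hW]
    simp only [inner_sub_left, inner_sub_right, inner_add_left, inner_add_right,
      real_inner_smul_left, real_inner_smul_right]
    rw [real_inner_self_eq_norm_sq x, real_inner_self_eq_norm_sq z, real_inner_self_eq_norm_sq m,
      real_inner_comm x z, real_inner_comm m z, real_inner_comm x m]
    rw [← ha, ← hb, ← hc, ← hpd, ← hqd, ← hwd]
    ring
  have imW : ⟪m, W⟫ = (2*(1-b)*(1-cc))*p + (2*(1-a)*(1-b))*q - (4*k*(1-a)*(1-cc))*b := by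
    rw [hW]
    simp only [inner_sub_right, inner_add_right, real_inner_smul_right]
    rw [real_inner_self_eq_norm_sq m, real_inner_comm x m]
    rw [← hb, ← hpd, ← hqd]
  have e1 : ‖W‖^2 = w0^2 := by rw [nW, hw0, hp, hq, hw]; ring
  have e2 : 2 * ⟪m, W⟫ = (1+b) * w0 := by rw [imW, hw0, hp, hq]; ring
  have hCS := real_inner_mul_inner_self_le m W
  rw [real_inner_self_eq_norm_sq m, real_inner_self_eq_norm_sq W, ← hb] at hCS
  rw [e1] at hCS
  have e4 : 4 * (⟪m, W⟫ * ⟪m, W⟫) = ((1+b)*w0) ^ 2 := by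
    linear_combination (2*⟪m, W⟫ + (1+b)*w0) * e2
  have hv00 : w0 = 0 := cs_aux ⟪m, W⟫ b w0 hCS e4 hb1
  rw [hw0] at hv00
  linarith

set_option maxHeartbeats 1000000 in
/-- Schweikart's constant bound. For every hyperbolic geodesic `c` in the
Poincaré disc not passing through the origin, with summit `c t₀` (the point of the
geodesic closest to the origin), and with endpoint `η` on the boundary circle, the
radial geodesic ray from the origin to `η` comes within hyperbolic distance
`log (1 + √2)` of the summit. -/
theorem schweikart_bound (c : ℝ → EuclideanSpace ℝ (Fin 2))
    (hin : ∀ t, ‖c t‖ < 1)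
    (hgeo : ∀ s t : ℝ, hDist (c s) (c t) = |s - t|)
    (hnot0 : ∀ t, c t ≠ 0)
    (t₀ : ℝ) (hsummit : ∀ t, hDist 0 (c t₀) ≤ hDist 0 (c t))
    (η : EuclideanSpace ℝ (Fin 2)) (hη : ‖η‖ = 1)
    (hlim : Filter.Tendsto c Filter.atTop (nhds η)) :
    ∃ u : ℝ, 0 ≤ u ∧ u < 1 ∧ hDist (u • η) (c t₀) < Real.log (1 + Real.sqrt 2) := by
  have hin' : ∀ t, 0 < 1 - ‖c t‖^2 := fun t => by nlinarith [hin t, norm_nonneg (c t)]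
  -- cosh of distances along the geodesic
  have QQ : ∀ s t : ℝ, (Real.cosh (s - t) - 1) * ((1 - ‖c s‖^2) * (1 - ‖c t‖^2))
      = 2 * ‖c s - c t‖^2 := by
    intro s t
    have hd : 0 < (1 - ‖c s‖^2) * (1 - ‖c t‖^2) := mul_pos (hin' s) (hin' t)
    have hq1 : (1:ℝ) ≤ 1 + 2 * ‖c s - c t‖ ^ 2 / ((1 - ‖c s‖ ^ 2) * (1 - ‖c t‖ ^ 2)) := by
      have : (0:ℝ) ≤ 2 * ‖c s - c t‖ ^ 2 / ((1 - ‖c s‖ ^ 2) * (1 - ‖c t‖ ^ 2)) := by positivity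
      linarith
    have h1 := congrArg Real.cosh (hgeo s t)
    rw [hDist, _root_.cosh_arcosh hq1, Real.cosh_abs] at h1
    have hd' : ((1 - ‖c s‖ ^ 2) * (1 - ‖c t‖ ^ 2)) ≠ 0 := ne_of_gt hd
    have h1' := congrArg (fun v => (v - 1) * ((1 - ‖c s‖ ^ 2) * (1 - ‖c t‖ ^ 2))) h1
    simp only [add_sub_cancel_left, div_mul_cancel₀ _ hd'] at h1'
    linarith
  -- the radial profile F
  obtain ⟨F, hFdef⟩ : ∃ F : ℝ → ℝ, ∀ t, F t = (1 + ‖c t‖^2)/(1 - ‖c t‖^2) :=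
    ⟨_, fun t => rfl⟩
  have hF1 : ∀ t, 1 ≤ F t := by
    intro t
    rw [hFdef t, le_div_iff₀ (hin' t)]
    nlinarith [norm_nonneg (c t), sq_nonneg (‖c t‖)]
  have hDist0 : ∀ x : EuclideanSpace ℝ (Fin 2), ‖x‖ < 1 →
      hDist 0 x = _root_.arcosh ((1 + ‖x‖^2)/(1 - ‖x‖^2)) := by
    intro x hx
    have hx' : 0 < 1 - ‖x‖^2 := by nlinarith [norm_nonneg x]
    rw [hDist]
    congr 1
    rw [norm_zero, zero_sub, norm_neg]
    field_simp
    ring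
  have hFmin : ∀ t, F t₀ ≤ F t := by
    intro t
    have h := hsummit t
    rw [hDist0 _ (hin t₀), hDist0 _ (hin t)] at h
    rw [hFdef t₀, hFdef t]
    exact le_of_arcosh_le (by rw [← hFdef t₀]; exact hF1 t₀) (by rw [← hFdef t]; exact hF1 t) h
  -- the functional equation
  have funEq : ∀ s u : ℝ, F s + F u = 2 * Real.cosh ((u - s)/2) * F ((s+u)/2) := by
    intro s u
    set k := Real.cosh ((u - s)/2) with hk
    have hk1 : 1 ≤ k := Real.one_le_cosh _
    have h1 : (k - 1) * ((1 - ‖c s‖^2) * (1 - ‖c ((s+u)/2)‖^2)) = 2 * ‖c s - c ((s+u)/2)‖^2 := by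
      have := QQ s ((s+u)/2)
      rw [show s - (s+u)/2 = -((u-s)/2) by ring, Real.cosh_neg] at this
      exact this
    have h2 : (k - 1) * ((1 - ‖c ((s+u)/2)‖^2) * (1 - ‖c u‖^2)) = 2 * ‖c ((s+u)/2) - c u‖^2 := by
      have := QQ ((s+u)/2) u
      rw [show (s+u)/2 - u = -((u-s)/2) by ring, Real.cosh_neg] at this
      exact this
    have h3 : (k^2 - 1) * ((1 - ‖c s‖^2) * (1 - ‖c u‖^2)) = ‖c s - c u‖^2 := by
      have := QQ s u
      rw [show s - u = 2 * (-((u-s)/2)) by ring, Real.cosh_two_mul, Real.sinh_sq,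
        Real.cosh_neg] at this
      rw [← hk] at this
      linarith
    have hmid := midpoint_identity (c s) (c ((s+u)/2)) (c u) k (hin s) (hin _) (hin u) h1 h2 h3
    rw [hFdef s, hFdef u, hFdef ((s+u)/2)]
    have d1 := hin' s; have d2 := hin' ((s+u)/2); have d3 := hin' u
    field_simp
    linear_combination hmid
  -- E and its vanishing
  set A := F t₀ with hA
  have hA1 : 1 ≤ A := hF1 t₀
  obtain ⟨E, hEdef⟩ : ∃ E : ℝ → ℝ, ∀ x, E x = F (t₀ + x) - A * Real.cosh x :=
    ⟨_, fun x => rfl⟩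
  have hodd : ∀ x, E (-x) = - E x := by
    intro x
    have h := funEq (t₀ - x) (t₀ + x)
    rw [show ((t₀ - x) + (t₀ + x))/2 = t₀ by ring, show ((t₀ + x) - (t₀ - x))/2 = x by ring] at h
    have e1 : E (-x) = F (t₀ - x) - A * Real.cosh x := by
      rw [hEdef, Real.cosh_neg, show t₀ + -x = t₀ - x by ring]
    rw [e1, hEdef]
    linarith
  have hdbl : ∀ x, E (2*x) = 2 * Real.cosh x * E x := by
    intro x
    have h := funEq t₀ (t₀ + 2*x)
    rw [show (t₀ + (t₀ + 2*x))/2 = t₀ + x by ring, show ((t₀ + 2*x) - t₀)/2 = x by ring] at h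
    have hc2 : Real.cosh (2*x) = 2 * (Real.cosh x)^2 - 1 := by
      rw [Real.cosh_two_mul, Real.sinh_sq]; ring
    rw [hEdef, hEdef, hc2]
    rw [← hA] at h
    linear_combination h
  have hApos : (0:ℝ) < A := lt_of_lt_of_le one_pos hA1
  have habs : ∀ x, |E x| ≤ A * (Real.cosh x - 1) := by
    intro x
    have hlow : ∀ v : ℝ, -(A * (Real.cosh v - 1)) ≤ E v := by
      intro v
      rw [hEdef]
      have := hFmin (t₀ + v)
      nlinarith [Real.one_le_cosh v]
    rw [abs_le]
    constructor
    · exact hlow x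
    · have h2 := hlow (-x)
      rw [hodd x, Real.cosh_neg] at h2
      linarith
  have hiter : ∀ n : ℕ, ∀ x : ℝ, |E x| ≤ A * (Real.cosh (x / 2^n) - 1) * (2^n * Real.exp |x|) := by
    intro n
    induction n with
    | zero =>
      intro x
      simp only [pow_zero, one_mul, div_one]
      have h1 : 1 ≤ Real.exp |x| := Real.one_le_exp (abs_nonneg x)
      have h2 := habs x
      nlinarith [Real.one_le_cosh x, habs x, abs_nonneg (E x)]
    | succ n ih =>
      intro x
      have hsplit : E x = 2 * Real.cosh (x/2) * E (x/2) := by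
        have := hdbl (x/2)
        rw [show 2*(x/2) = x by ring] at this
        exact this
      have hcpos : 0 < Real.cosh (x/2) := Real.cosh_pos _
      have h1 : |E x| = 2 * Real.cosh (x/2) * |E (x/2)| := by
        rw [hsplit, abs_mul, abs_of_nonneg (by positivity : (0:ℝ) ≤ 2 * Real.cosh (x/2))]
      have h2 := ih (x/2)
      have h3 : x / 2 / 2^n = x / 2^(n+1) := by
        rw [div_div, pow_succ]; ring_nf
      rw [h3] at h2
      have hch1 : 0 ≤ Real.cosh (x / 2^(n+1)) - 1 := by linarith [Real.one_le_cosh (x / 2^(n+1))]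
      have hce : Real.cosh (x/2) ≤ Real.exp (|x|/2) := by
        have := cosh_le_exp_abs (x/2)
        rwa [abs_div, abs_two] at this
      have hax : |x/2| = |x|/2 := by rw [abs_div, abs_two]
      rw [hax] at h2
      have hexp2 : Real.exp (|x|/2) * Real.exp (|x|/2) = Real.exp |x| := by
        rw [← Real.exp_add]; ring_nf
      calc |E x| = 2 * Real.cosh (x/2) * |E (x/2)| := h1
        _ ≤ 2 * Real.cosh (x/2) * (A * (Real.cosh (x / 2^(n+1)) - 1) * (2^n * Real.exp (|x|/2))) := by
            apply mul_le_mul_of_nonneg_left h2 (by positivity)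
        _ ≤ 2 * Real.exp (|x|/2) * (A * (Real.cosh (x / 2^(n+1)) - 1) * (2^n * Real.exp (|x|/2))) := by
            apply mul_le_mul_of_nonneg_right _ (by positivity)
            linarith
        _ = A * (Real.cosh (x / 2^(n+1)) - 1) * (2^(n+1) * (Real.exp (|x|/2) * Real.exp (|x|/2))) := by
            rw [pow_succ]; ring
        _ = A * (Real.cosh (x / 2^(n+1)) - 1) * (2^(n+1) * Real.exp |x|) := by rw [hexp2]
  have hE0 : ∀ x, E x = 0 := by
    intro x
    set C := A * x^2 * (Real.exp |x|)^2 with hC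
    have hCnn : 0 ≤ C := by positivity
    have key : ∀ n : ℕ, |E x| ≤ C / 2^n := by
      intro n
      have h2n : (0:ℝ) < 2^n := by positivity
      have h1 := hiter n x
      have hxa : |x / 2^n| ≤ |x| := by
        rw [abs_div, abs_of_pos h2n]
        calc |x| / 2^n ≤ |x| / 1 :=
              div_le_div_of_nonneg_left (abs_nonneg x) one_pos
                (one_le_pow₀ (by norm_num : (1:ℝ) ≤ 2))
          _ = |x| := div_one _
      have h2 : Real.cosh (x / 2^n) - 1 ≤ (x / 2^n)^2 / 2 * Real.exp |x| := by
        have h3 := cosh_sub_one_le (x / 2^n)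
        have h4 : Real.exp |x / 2^n| ≤ Real.exp |x| := Real.exp_le_exp.mpr hxa
        nlinarith [sq_nonneg (x / 2^n)]
      have h5 : A * (Real.cosh (x / 2^n) - 1) * (2^n * Real.exp |x|)
          ≤ A * ((x / 2^n)^2 / 2 * Real.exp |x|) * (2^n * Real.exp |x|) :=
        mul_le_mul_of_nonneg_right (mul_le_mul_of_nonneg_left h2 hApos.le) (by positivity)
      have h6 : A * ((x / 2^n)^2 / 2 * Real.exp |x|) * (2^n * Real.exp |x|) = C / (2 * 2^n) := by
        rw [hC]; field_simp
      have h7 : C / (2 * 2^n) ≤ C / 2^n :=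
        div_le_div_of_nonneg_left hCnn h2n (by linarith)
      linarith
    by_contra hne
    have hpos : 0 < |E x| := abs_pos.mpr hne
    obtain ⟨n, hn⟩ := pow_unbounded_of_one_lt (C / |E x|) (one_lt_two (α := ℝ))
    have h2n : (0:ℝ) < 2^n := by positivity
    have h8 : C < 2^n * |E x| := by
      rw [div_lt_iff₀ hpos] at hn
      linarith [hn]
    have h9 : 2^n * |E x| ≤ C := by
      have := key n
      rw [le_div_iff₀ h2n] at this
      linarith
    linarith
  have hFt : ∀ t, F t = A * Real.cosh (t - t₀) := by
    intro t
    have h := hE0 (t - t₀)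
    rw [hEdef, show t₀ + (t - t₀) = t by ring] at h
    linarith
  -- the endpoint relation
  set r2 := ‖c t₀‖^2 with hr2
  have hr20 : 0 < r2 := by
    rw [hr2]
    have : 0 < ‖c t₀‖ := norm_pos_iff.mpr (hnot0 t₀)
    positivity
  have hr21 : r2 < 1 := by rw [hr2]; nlinarith [hin t₀, norm_nonneg (c t₀)]
  have hAval : A = (1 + r2)/(1 - r2) := by rw [hA, hFdef t₀]
  clear_value r2
  have hr2ne : (1:ℝ) - r2 ≠ 0 := by linarith
  have eq2 : ∀ t, ‖c t₀ - c t‖^2 * (A * Real.cosh (t - t₀) + 1)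
      = (Real.cosh (t - t₀) - 1) * (1 - r2) := by
    intro t
    have hT1 : 1 ≤ Real.cosh (t - t₀) := Real.one_le_cosh _
    have hQ := QQ t₀ t
    rw [show t₀ - t = -(t - t₀) by ring, Real.cosh_neg, ← hr2] at hQ
    have hFt' := hFt t
    rw [hFdef t] at hFt'
    have hn := hin' t
    rw [div_eq_iff (ne_of_gt hn)] at hFt'
    have h5 : (1 - ‖c t‖^2) * (A * Real.cosh (t - t₀) + 1) = 2 := by linear_combination -hFt'
    linear_combination (-(A * Real.cosh (t - t₀) + 1)/2) * hQ
      + ((Real.cosh (t - t₀) - 1) * (1 - r2)/2) * h5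
  have hccosh : Filter.Tendsto (fun t => Real.cosh (t - t₀)) Filter.atTop Filter.atTop := by
    have h1 : Filter.Tendsto (fun t : ℝ => t - t₀) Filter.atTop Filter.atTop := by
      simpa [sub_eq_add_neg] using
        Filter.tendsto_atTop_add_const_right Filter.atTop (-t₀) Filter.tendsto_id
    have h2 : ∀ v : ℝ, Real.exp v / 2 ≤ Real.cosh v := by
      intro v
      rw [Real.cosh_eq]
      have := Real.exp_pos (-v)
      linarith
    apply Filter.tendsto_atTop_mono (fun t => h2 (t - t₀))
    exact ((Real.tendsto_exp_atTop).comp h1).atTop_div_const two_pos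
  have hden2 : Filter.Tendsto (fun t => A * Real.cosh (t - t₀) + 1) Filter.atTop Filter.atTop :=
    Filter.tendsto_atTop_add_const_right Filter.atTop 1 (hccosh.const_mul_atTop hApos)
  have hfrac : Filter.Tendsto (fun t => (A + 1)/(A * Real.cosh (t - t₀) + 1))
      Filter.atTop (nhds 0) := hden2.const_div_atTop (A + 1)
  have hRHS : Filter.Tendsto (fun t => (1 - r2)/A * (1 - (A + 1)/(A * Real.cosh (t - t₀) + 1)))
      Filter.atTop (nhds ((1 - r2)/A * (1 - 0))) :=
    Filter.Tendsto.mul tendsto_const_nhds (Filter.Tendsto.sub tendsto_const_nhds hfrac)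
  have hLHS : Filter.Tendsto (fun t => ‖c t₀ - c t‖^2) Filter.atTop (nhds (‖c t₀ - η‖^2)) := by
    have hcont : Continuous fun v : EuclideanSpace ℝ (Fin 2) => ‖c t₀ - v‖^2 :=
      ((continuous_const.sub continuous_id).norm.pow 2)
    exact (hcont.tendsto η).comp hlim
  have hpt : ∀ t, (1 - r2)/A * (1 - (A + 1)/(A * Real.cosh (t - t₀) + 1)) = ‖c t₀ - c t‖^2 := by
    intro t
    have hT1 : 1 ≤ Real.cosh (t - t₀) := Real.one_le_cosh _
    have hdenpos : 0 < A * Real.cosh (t - t₀) + 1 := by nlinarith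
    have h := eq2 t
    field_simp
    linear_combination (-A) * h
  have heq : (1 - r2)/A * (1 - 0) = ‖c t₀ - η‖^2 :=
    tendsto_nhds_unique (hRHS.congr hpt) hLHS
  have hnormeta : ‖c t₀ - η‖^2 = (1 - r2)^2/(1 + r2) := by
    rw [← heq, hAval]
    have h1p : (0:ℝ) < 1 + r2 := by linarith
    field_simp
    ring
  have hip : ⟪c t₀, η⟫ = 2*r2/(1 + r2) := by
    have hns := norm_sub_sq_real (c t₀) η
    rw [hη, hnormeta, ← hr2] at hns
    have h1p : (0:ℝ) < 1 + r2 := by linarith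
    field_simp at hns ⊢
    linarith
  -- the final choice of u
  set S := Real.sqrt ((1 + r2)^2 + 4*r2) with hSdef
  have hS2 : S^2 = (1 + r2)^2 + 4*r2 := Real.sq_sqrt (by positivity)
  have hSnn : 0 ≤ S := Real.sqrt_nonneg _
  clear_value S
  have hSgt : 1 + r2 < S := by nlinarith [hS2, hSnn, hr20]
  have hs2 : (Real.sqrt 2)^2 = 2 := Real.sq_sqrt (by norm_num)
  have hs1 : 1 < Real.sqrt 2 := by nlinarith [Real.sqrt_nonneg 2]
  have hSlt : S < Real.sqrt 2 * (1 + r2) := by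
    apply lt_of_pow_lt_pow_left₀ 2 (by positivity)
    rw [mul_pow, hs2]
    nlinarith [hr21, hr20]
  set u := ((1 + r2)^2 - (1 - r2)*S)/(4*r2) with hu
  have huS : (1 - r2)*S = (1 + r2)^2 - 4*r2*u := by
    rw [hu]; field_simp; ring
  have hu1 : u < 1 := by
    have h1 : (1 - r2)*(1 + r2) < (1 - r2)*S := by
      apply mul_lt_mul_of_pos_left hSgt (by linarith)
    rw [huS] at h1
    nlinarith [hr20]
  have hu0 : 0 ≤ u := by
    have h1 : ((1 - r2)*S)^2 ≤ ((1 + r2)^2)^2 := by nlinarith [hS2, hr20]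
    have h2 : (1 - r2)*S ≤ (1 + r2)^2 :=
      le_of_pow_le_pow_left₀ two_ne_zero (by positivity) h1
    rw [hu]
    apply div_nonneg (by linarith) (by linarith)
  clear_value u
  have hq : 2*r2*(u^2 + 1) = u*(1 + r2)^2 := by
    have hsq : ((1 - r2)*S)^2 = ((1 + r2)^2 - 4*r2*u)^2 := by rw [huS]
    rw [mul_pow, hS2] at hsq
    have hq8 : (8*r2) * (2*r2*(u^2 + 1) - u*(1 + r2)^2) = 0 := by linear_combination (-1) * hsq
    have h8 : (8*r2) ≠ 0 := by positivity
    rcases mul_eq_zero.mp hq8 with h | h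
    · exact absurd h h8
    · linarith
  -- norm computation
  have hnu : ‖u • η‖^2 = u^2 := by
    rw [norm_smul, hη, Real.norm_eq_abs]
    simp [sq_abs]
  have hnum : ‖u • η - c t₀‖^2 = u^2 - 2*u*(2*r2/(1 + r2)) + r2 := by
    have h := norm_sub_sq_real (u • η) (c t₀)
    rw [hnu, ← hr2, real_inner_smul_left, real_inner_comm (c t₀) η, hip] at h
    linarith [h]
  have h1p : (0:ℝ) < 1 + r2 := by linarith
  have h1mu2 : 0 < 1 - u^2 := by nlinarith
  -- the key inequality
  have hEk : (1 + r2) * (2 * ‖u • η - c t₀‖^2) = 2*r2*(1 + r2 - 2*u)*(1 - u^2) := by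
    rw [hnum]
    field_simp
    linear_combination (-u) * hq
  have hfin0 : 2*r2*(1 + r2 - 2*u) < (Real.sqrt 2 - 1)*((1 - r2)*(1 + r2)) := by
    have h1 : (1 - r2)*S < (1 - r2)*(Real.sqrt 2*(1 + r2)) :=
      mul_lt_mul_of_pos_left hSlt (by linarith)
    rw [huS] at h1
    nlinarith [hr20]
  have hfin1 : 2*r2*(1 + r2 - 2*u)*(1 - u^2)
      < (Real.sqrt 2 - 1)*((1 - r2)*(1 + r2))*(1 - u^2) :=
    mul_lt_mul_of_pos_right hfin0 h1mu2
  have FIN : 2 * ‖u • η - c t₀‖^2 < (Real.sqrt 2 - 1)*((1 - u^2)*(1 - r2)) := by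
    have h2 : (1 + r2) * (2 * ‖u • η - c t₀‖^2)
        < (1 + r2) * ((Real.sqrt 2 - 1)*((1 - u^2)*(1 - r2))) := by
      rw [hEk]
      nlinarith [hfin1]
    exact lt_of_mul_lt_mul_left h2 (by linarith)
  -- wrap up
  refine ⟨u, hu0, hu1, ?_⟩
  rw [hDist, hnu, ← hr2]
  have hdpos : 0 < (1 - u^2) * (1 - r2) := mul_pos h1mu2 (by linarith)
  have harg1 : (1:ℝ) ≤ 1 + 2 * ‖u • η - c t₀‖^2 / ((1 - u^2) * (1 - r2)) := by
    have : (0:ℝ) ≤ 2 * ‖u • η - c t₀‖^2 / ((1 - u^2) * (1 - r2)) := by positivity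
    linarith
  have harg2 : 1 + 2 * ‖u • η - c t₀‖^2 / ((1 - u^2) * (1 - r2)) < Real.sqrt 2 := by
    have h3 : 2 * ‖u • η - c t₀‖^2 / ((1 - u^2) * (1 - r2)) < Real.sqrt 2 - 1 := by
      rw [div_lt_iff₀ hdpos]
      calc 2 * ‖u • η - c t₀‖^2 < (Real.sqrt 2 - 1)*((1 - u^2)*(1 - r2)) := FIN
        _ = (Real.sqrt 2 - 1) * ((1 - u^2) * (1 - r2)) := by ring
    linarith
  exact arcosh_lt harg1 harg2
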